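/- Let I, ξ, and permutations α ∈ Sym(I), β ∈ Sym({a,b,c}) be given, and define ζ(i,j) = β ∘ ξ(α⁻¹(i), α⁻¹(j)) ∘ β⁻¹. Then the map F sending x_i ↦ (β(x))_{α(i)}, q^x ↦ q^{β(x)}, q^{i,j} ↦ q^{α(i),α(j)} is an isomorphism of T(I, ξ, G_2(I)) onto T(I, ζ, G_2(I)). -/

import Mathlib

/-! Systems of triangle perspectives (STP). The letter set 𝒯 = {a,b,c} is
encoded as `Fin 3`. Points: `q^x` (the base line), `x_i`, and `q^{i,j}`
for 2-subsets `{i,j}` of `I`. -/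

/-- 2-subsets of `I`. -/
abbrev P2 (I : Type*) [DecidableEq I] := {z : Finset I // z.card = 2}

/-- The point set of a system of triangle perspectives over index set `I`. -/
abbrev STPPoint (I : Type*) [DecidableEq I] := Fin 3 ⊕ ((Fin 3 × I) ⊕ P2 I)

variable {I : Type*} [Fintype I] [DecidableEq I]

/-- The point `q^x` on the base line. -/
def qpt (x : Fin 3) : STPPoint I := Sum.inl x

/-- The point `x_i` (vertex `x` of the `i`-th triangle). -/
def xpt (x : Fin 3) (i : I) : STPPoint I := Sum.inr (Sum.inl (x, i))

/-- The point `q^z` for a 2-subset `z` of `I`. -/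
def cpt (z : P2 I) : STPPoint I := Sum.inr (Sum.inr z)

/-- The perspective center `q^{i,j}`. -/
def qq (i j : I) (h : i ≠ j) : STPPoint I := cpt ⟨{i, j}, Finset.card_pair h⟩

/-- The base line `L = {q^a, q^b, q^c}`. -/
def baseLine : Finset (STPPoint I) := {qpt 0, qpt 1, qpt 2}

/-- The line `X_i = {q^y, q^z, x_i}` (where `{x,y,z} = {a,b,c}`) of the Veblen
configuration `𝒱^i`. -/
def veblenLine (x : Fin 3) (i : I) : Finset (STPPoint I) :=
  insert (xpt x i) ((Finset.univ.filter (fun y => y ≠ x)).image qpt)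

/-- The perspective ray `{q^{i,j}, x_i, (ξ(i,j)(x))_j}`. -/
def ray (ξ : I → I → Equiv.Perm (Fin 3)) (i j : I) (h : i ≠ j) (x : Fin 3) :
    Finset (STPPoint I) := {qq i j h, xpt x i, xpt (ξ i j x) j}

/-- The lines of the simple system of triangle perspectives `T(I, ξ, G_2(I))`:
the base line, the Veblen lines, the perspective rays, and the Grassmannian
lines `{q^{i,j}, q^{j,l}, q^{i,l}}`. -/
def STPlines (ξ : I → I → Equiv.Perm (Fin 3)) : Set (Finset (STPPoint I)) :=
  {L | L = baseLine} ∪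
  {L | ∃ x i, L = veblenLine x i} ∪
  {L | ∃ i j, ∃ h : i ≠ j, ∃ x, L = ray ξ i j h x} ∪
  {L | ∃ i j l, ∃ hij : i ≠ j, ∃ hjl : j ≠ l, ∃ hil : i ≠ l,
    L = {qq i j hij, qq j l hjl, qq i l hil}}

/-- Two points are collinear if they lie on a common line. -/
def STPCollinear (ξ : I → I → Equiv.Perm (Fin 3)) (p q : STPPoint I) : Prop :=
  ∃ L ∈ STPlines ξ, p ∈ L ∧ q ∈ L

/-- The set `𝒦_i = {a_i, b_i, c_i} ∪ {q^{i,j} : j ≠ i}`. -/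
def Kset (i : I) : Finset (STPPoint I) :=
  {xpt 0 i, xpt 1 i, xpt 2 i} ∪
    (Finset.univ.filter (fun z : P2 I => i ∈ z.1)).image cpt

/-- `Y` induces a complete graph freely contained in the configuration with
line set `Lines`: each edge (2-subset) of `Y` lies on a unique line, and
lines of edges meet only when the edges share a vertex in `Y`. -/
def FreelyContains (Lines : Set (Finset (STPPoint I))) (Y : Finset (STPPoint I)) : Prop :=
  (∀ e ∈ Y.powersetCard 2, ∃! L, L ∈ Lines ∧ e ⊆ L) ∧
  (∀ e₁ ∈ Y.powersetCard 2, ∀ e₂ ∈ Y.powersetCard 2, ∀ L₁ ∈ Lines, ∀ L₂ ∈ Lines,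
    e₁ ⊆ L₁ → e₂ ⊆ L₂ → (L₁ ∩ L₂).Nonempty → (e₁ ∩ e₂).Nonempty)

/-- The point map `x_i ↦ (β x)_{α i}`, `q^x ↦ q^{β x}`,
`q^{i,j} ↦ q^{α i, α j}` induced by `α ∈ Sym(I)`, `β ∈ Sym({a,b,c})`. -/
def Fmap (α : Equiv.Perm I) (β : Equiv.Perm (Fin 3)) : STPPoint I → STPPoint I
  | Sum.inl x => Sum.inl (β x)
  | Sum.inr (Sum.inl (x, i)) => Sum.inr (Sum.inl (β x, α i))
  | Sum.inr (Sum.inr z) => Sum.inr (Sum.inr ⟨z.1.image α, by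
      rw [Finset.card_image_of_injective _ α.injective, z.2]⟩)

/-- With `ζ(i,j) = β ∘ ξ(α⁻¹ i, α⁻¹ j) ∘ β⁻¹`, the map `Fmap α β` is an
isomorphism of `T(I, ξ, G_2(I))` onto `T(I, ζ, G_2(I))`: a bijection of points
inducing a bijection of lines. -/
lemma Fmap_Fmap (α : Equiv.Perm I) (β : Equiv.Perm (Fin 3)) (p : STPPoint I) :
    Fmap α⁻¹ β⁻¹ (Fmap α β p) = p := by
  rcases p with x | ⟨x, i⟩ | z
  · simp [Fmap]
  · simp [Fmap]
  · simp only [Fmap, Sum.inr.injEq]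
    ext1
    simp only [Finset.image_image]
    rw [show ((⇑α⁻¹ ∘ ⇑α) : I → I) = id from funext fun x => Equiv.symm_apply_apply α x,
      Finset.image_id]

lemma Fmap_qq (α : Equiv.Perm I) (β : Equiv.Perm (Fin 3)) (i j : I) (h : i ≠ j) :
    Fmap α β (qq i j h) = qq (α i) (α j) (fun e => h (α.injective e)) := by
  simp only [qq, cpt, Fmap, Sum.inr.injEq]
  ext1
  simp

lemma image_baseLine (α : Equiv.Perm I) (β : Equiv.Perm (Fin 3)) :
    (baseLine : Finset (STPPoint I)).image (Fmap α β) = baseLine := by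
  have h3 : ({β 0, β 1, β 2} : Finset (Fin 3)) = {0, 1, 2} := by
    have : ({0, 1, 2} : Finset (Fin 3)) = Finset.univ := by decide
    rw [this, ← Finset.image_univ_equiv β]
    rw [← this]
    simp [Finset.image_insert]
  have : (baseLine : Finset (STPPoint I)) = Finset.image qpt {0, 1, 2} := by
    simp [baseLine, Finset.image_insert]
  rw [this, Finset.image_image]
  have hc : (Fmap α β ∘ qpt : Fin 3 → STPPoint I) = qpt ∘ β := rfl
  have hb : Finset.image β {0, 1, 2} = ({0, 1, 2} : Finset (Fin 3)) := by
    simp only [Finset.image_insert, Finset.image_singleton]; exact h3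
  rw [hc, ← Finset.image_image, hb]

lemma filter_ne_image (β : Equiv.Perm (Fin 3)) (x : Fin 3) :
    (Finset.univ.filter (fun y => y ≠ x)).image β
      = Finset.univ.filter (fun y => y ≠ β x) := by
  ext y
  simp only [Finset.mem_image, Finset.mem_filter, Finset.mem_univ, true_and]
  constructor
  · rintro ⟨z, hz, rfl⟩
    exact fun e => hz (β.injective e)
  · rintro hy
    exact ⟨β⁻¹ y, fun e => hy (by simpa using congrArg β e), by simp⟩

lemma image_veblenLine (α : Equiv.Perm I) (β : Equiv.Perm (Fin 3)) (x : Fin 3) (i : I) :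
    (veblenLine x i : Finset (STPPoint I)).image (Fmap α β)
      = veblenLine (β x) (α i) := by
  rw [veblenLine, Finset.image_insert, Finset.image_image]
  have : (Fmap α β ∘ qpt : Fin 3 → STPPoint I) = qpt ∘ β := by
    funext y; rfl
  rw [this, ← Finset.image_image, filter_ne_image]
  rfl

lemma image_ray (ξ ζ : I → I → Equiv.Perm (Fin 3))
    (α : Equiv.Perm I) (β : Equiv.Perm (Fin 3))
    (hζ : ∀ i j, ζ i j = β * ξ (α⁻¹ i) (α⁻¹ j) * β⁻¹)
    (i j : I) (h : i ≠ j) (x : Fin 3) :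
    (ray ξ i j h x).image (Fmap α β)
      = ray ζ (α i) (α j) (fun e => h (α.injective e)) (β x) := by
  rw [ray, Finset.image_insert, Finset.image_insert, Finset.image_singleton, Fmap_qq]
  have hz : ζ (α i) (α j) (β x) = β (ξ i j x) := by
    rw [hζ]; simp
  simp [ray, Fmap, xpt, hz]

lemma fwd (ξ ζ : I → I → Equiv.Perm (Fin 3))
    (α : Equiv.Perm I) (β : Equiv.Perm (Fin 3))
    (hζ : ∀ i j, ζ i j = β * ξ (α⁻¹ i) (α⁻¹ j) * β⁻¹) :
    ∀ L ∈ STPlines ξ, L.image (Fmap α β) ∈ STPlines ζ := by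
  intro L hL
  rcases hL with ((hL | hL) | hL) | hL
  · left; left; left
    rw [hL]; exact image_baseLine α β
  · obtain ⟨x, i, rfl⟩ := hL
    left; left; right
    exact ⟨β x, α i, image_veblenLine α β x i⟩
  · obtain ⟨i, j, h, x, rfl⟩ := hL
    left; right
    exact ⟨α i, α j, fun e => h (α.injective e), β x,
      image_ray ξ ζ α β hζ i j h x⟩
  · obtain ⟨i, j, l, hij, hjl, hil, rfl⟩ := hL
    right
    refine ⟨α i, α j, α l, fun e => hij (α.injective e),
      fun e => hjl (α.injective e), fun e => hil (α.injective e), ?_⟩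
    rw [Finset.image_insert, Finset.image_insert, Finset.image_singleton,
      Fmap_qq, Fmap_qq, Fmap_qq]

theorem stmt_8 (ξ ζ : I → I → Equiv.Perm (Fin 3))
    (hξ1 : ∀ i, ξ i i = 1) (hξ2 : ∀ i j, ξ j i = (ξ i j)⁻¹)
    (α : Equiv.Perm I) (β : Equiv.Perm (Fin 3))
    (hζ : ∀ i j, ζ i j = β * ξ (α⁻¹ i) (α⁻¹ j) * β⁻¹) :
    Function.Bijective (Fmap α β : STPPoint I → STPPoint I) ∧
    (∀ L : Finset (STPPoint I),
      L ∈ STPlines ξ ↔ L.image (Fmap α β) ∈ STPlines ζ) := by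
  have hinv : ∀ p : STPPoint I, Fmap α⁻¹ β⁻¹ (Fmap α β p) = p := Fmap_Fmap α β
  have hinv' : ∀ p : STPPoint I, Fmap α β (Fmap α⁻¹ β⁻¹ p) = p := by
    have := Fmap_Fmap α⁻¹ β⁻¹
    simpa using this
  constructor
  · exact Function.bijective_iff_has_inverse.2 ⟨Fmap α⁻¹ β⁻¹, hinv, hinv'⟩
  · intro L
    constructor
    · exact fun hL => fwd ξ ζ α β hζ L hL
    · intro hL
      have hζ' : ∀ i j, ξ i j = β⁻¹ * ζ ((α⁻¹)⁻¹ i) ((α⁻¹)⁻¹ j) * (β⁻¹)⁻¹ := by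
        intro i j
        simp only [inv_inv, hζ]
        group
        simp
      have := fwd ζ ξ α⁻¹ β⁻¹ hζ' _ hL
      rwa [Finset.image_image, show (Fmap α⁻¹ β⁻¹ ∘ Fmap α β : STPPoint I → STPPoint I) = id from funext hinv, Finset.image_id] at this
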